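/- Let s ∈ Z_5 with s^2 = 29 and s ≡ 2 (mod 5), and α = (7+s)/10 ∈ Q_5. Then for every t ∈ Q_5 with v_5(t) ≥ 0, the element 10(t^2 + α) is a nonzero square in Q_5. -/

import Mathlib

instance : Fact (Nat.Prime 5) := ⟨by norm_num⟩

lemma norm_one_of_toZMod_ne_zero (x : ℤ_[5]) (h : PadicInt.toZMod x ≠ 0) : ‖x‖ = 1 := by
  by_contra hne
  have h1 : ‖x‖ < 1 := lt_of_le_of_ne x.2 hne
  rw [PadicInt.norm_lt_one_iff_dvd, ← Ideal.mem_span_singleton,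
    ← PadicInt.maximalIdeal_eq_span_p, ← PadicInt.ker_toZMod, RingHom.mem_ker] at h1
  exact h h1

/-- Let s ∈ ℤ₅ with s² = 29 and s ≡ 2 (mod 5), and α = (7+s)/10 ∈ ℚ₅.  Then for
every t ∈ ℚ₅ with v₅(t) ≥ 0, the element 10(t² + α) is a nonzero square in ℚ₅. -/
theorem ten_t_sq_add_alpha_square (s : ℤ_[5]) (hs : s ^ 2 = 29)
    (hs2 : PadicInt.toZMod s = 2) (t : ℚ_[5]) (ht : 0 ≤ t.valuation) :
    10 * (t ^ 2 + (7 + (s : ℚ_[5])) / 10) ≠ 0 ∧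
      IsSquare (10 * (t ^ 2 + (7 + (s : ℚ_[5])) / 10)) := by
  have htn : ‖t‖ ≤ 1 := (Padic.norm_le_one_iff_val_nonneg t).2 ht
  set t' : ℤ_[5] := ⟨t, htn⟩ with ht'
  set b : ℤ_[5] := 10 * t' ^ 2 + 7 + s with hb
  have hbz : PadicInt.toZMod b = 4 := by
    simp only [hb, map_add, map_mul, map_pow, map_ofNat, hs2]
    rw [show ((10 : ZMod 5)) = 0 by decide]
    ring_nf
    decide
  have hx : 10 * (t ^ 2 + (7 + (s : ℚ_[5])) / 10) = (b : ℚ_[5]) := by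
    have h10 : (10 : ℚ_[5]) ≠ 0 := by norm_num
    push_cast [hb, ht']
    field_simp
    push_cast
    rw [show ((10 : ℤ_[5]) : ℚ_[5]) = 10 from rfl, show ((7 : ℤ_[5]) : ℚ_[5]) = 7 from rfl]
    rw [show ((⟨t, htn⟩ ^ 2 : ℤ_[5]) : ℚ_[5]) = t ^ 2 from rfl]
    ring
  have hbu : ‖b‖ = 1 := norm_one_of_toZMod_ne_zero b (by rw [hbz]; decide)
  have hbne : b ≠ 0 := fun h => by simp [h] at hbu
  -- Hensel's lemma applied to F = X² - b at a = 2
  set F : Polynomial ℤ_[5] := Polynomial.X ^ 2 - Polynomial.C b with hF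
  have hFeval : F.eval 2 = 4 - b := by simp [hF]; ring
  have hFderiv : F.derivative.eval 2 = 4 := by
    simp [hF]
    ring
  have h4 : ‖(4 : ℤ_[5])‖ = 1 := norm_one_of_toZMod_ne_zero 4 (by rw [map_ofNat]; decide)
  have hlt : ‖F.eval 2‖ < 1 := by
    rw [hFeval, PadicInt.norm_lt_one_iff_dvd]
    have h0 : PadicInt.toZMod ((4 : ℤ_[5]) - b) = 0 := by rw [map_sub, hbz, map_ofNat]; decide
    rwa [← RingHom.mem_ker, PadicInt.ker_toZMod, PadicInt.maximalIdeal_eq_span_p,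
      Ideal.mem_span_singleton] at h0
  have hnorm : ‖F.eval 2‖ < ‖F.derivative.eval 2‖ ^ 2 := by
    rw [hFderiv, h4]; simpa using hlt
  obtain ⟨z, hz, -⟩ := hensels_lemma hnorm
  have hz2 : z ^ 2 = b := by
    have := hz
    simp [hF] at this
    linear_combination this
  refine ⟨?_, ?_⟩
  · rw [hx]
    exact (PadicInt.coe_ne_zero (x := b)).2 hbne
  · refine ⟨(z : ℚ_[5]), ?_⟩
    rw [hx, ← hz2]
    push_cast
    ring
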